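/- Let δ > 0. Define θ(s) = 1/(δ·s − 1/π) for s < 1/(δπ), and h(s) = (sin θ(s) · cos(θ(s)²), sin θ(s) · sin(θ(s)²)) ∈ ℝ². Then every point of the closed disk {(1/(δπ), x, y) ∈ ℝ³ : x² + y² ≤ 1} lies in the closure in ℝ³ of the graph {(s, h₁(s), h₂(s)) : s < 1/(δπ)}. -/

import Mathlib

/-- sin is 1-Lipschitz. -/
lemma sin_lip (a b : ℝ) : |Real.sin a - Real.sin b| ≤ |a - b| := by
  rw [Real.sin_sub_sin]
  have h1 : |Real.sin ((a - b) / 2)| ≤ |(a - b) / 2| := Real.abs_sin_le_abs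
  have h2 : |Real.cos ((a + b) / 2)| ≤ 1 := Real.abs_cos_le_one _
  calc |2 * Real.sin ((a - b) / 2) * Real.cos ((a + b) / 2)|
      = 2 * |Real.sin ((a - b) / 2)| * |Real.cos ((a + b) / 2)| := by
        rw [abs_mul, abs_mul, abs_two]
    _ ≤ 2 * |(a - b) / 2| * 1 := by
        apply mul_le_mul (by nlinarith [abs_nonneg (Real.sin ((a - b) / 2))]) h2
          (abs_nonneg _) (by positivity)
    _ = |a - b| := by rw [abs_div, abs_two]; ring

/-- Polar coordinates. -/
lemma polar (x y : ℝ) : ∃ r φ : ℝ, 0 ≤ r ∧ r ^ 2 = x ^ 2 + y ^ 2 ∧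
    x = r * Real.cos φ ∧ y = r * Real.sin φ := by
  refine ⟨‖(⟨x, y⟩ : ℂ)‖, Complex.arg ⟨x, y⟩, norm_nonneg _, ?_, ?_, ?_⟩
  · rw [Complex.sq_norm, Complex.normSq_mk]; ring
  · rw [Complex.norm_mul_cos_arg]
  · rw [Complex.norm_mul_sin_arg]

set_option maxHeartbeats 1000000 in
/-- Key density lemma: for any `φ`, any `t` with `|t| ≤ 1`, and any bound `W`, there is
`u = √(φ + 2πm)` with `u > W` and `sin u` within `ε` of `t`. -/
lemma key (φ t W ε : ℝ) (ht : |t| ≤ 1) (hε : 0 < ε) :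
    ∃ (m : ℕ) (u : ℝ), u ^ 2 = φ + 2 * Real.pi * m ∧ W < u ∧ |Real.sin u - t| < ε := by
  have hπ := Real.pi_pos
  set v := Real.arcsin t with hv
  have hsv : Real.sin v = t :=
    Real.sin_arcsin (abs_le.1 ht).1 (abs_le.1 ht).2
  set B : ℝ := max (max W 1) (max φ (4 * Real.pi / ε)) with hB
  obtain ⟨j, hj⟩ := exists_nat_gt ((B - v) / (2 * Real.pi))
  have hj' : B - v < j * (2 * Real.pi) := (div_lt_iff₀ (by positivity)).1 hj
  set w : ℝ := v + j * (2 * Real.pi) with hw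
  have hwB : B < w := by simp only [hw]; linarith
  have hw1 : (1 : ℝ) < w := lt_of_le_of_lt ((le_max_right W 1).trans (le_max_left _ _)) hwB
  have hwφ : φ < w := lt_of_le_of_lt ((le_max_left φ _).trans (le_max_right _ _)) hwB
  have hwε : 4 * Real.pi / ε < w :=
    lt_of_le_of_lt ((le_max_right φ _).trans (le_max_right _ _)) hwB
  have hwW : W < w := lt_of_le_of_lt ((le_max_left W 1).trans (le_max_left _ _)) hwB
  have hw0 : 0 < w := by linarith
  have hwsq : φ ≤ w ^ 2 := by nlinarith
  set a : ℝ := (w ^ 2 - φ) / (2 * Real.pi) with ha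
  have ha0 : 0 ≤ a := div_nonneg (by linarith) (by positivity)
  set m : ℕ := ⌊a⌋₊ + 1 with hm
  have h1 : (⌊a⌋₊ : ℝ) ≤ a := Nat.floor_le ha0
  have h2 : a < (⌊a⌋₊ : ℝ) + 1 := Nat.lt_floor_add_one a
  have hmcast : (m : ℝ) = (⌊a⌋₊ : ℝ) + 1 := by rw [hm]; push_cast; ring
  have e1 : w ^ 2 - φ = a * (2 * Real.pi) := by
    rw [ha]; field_simp
  have hlow : w ^ 2 < φ + 2 * Real.pi * m := by rw [hmcast]; nlinarith
  have hhigh : φ + 2 * Real.pi * m ≤ w ^ 2 + 2 * Real.pi := by rw [hmcast]; nlinarith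
  set u : ℝ := Real.sqrt (φ + 2 * Real.pi * m) with hu
  have harg : 0 ≤ φ + 2 * Real.pi * (m : ℝ) := by nlinarith
  have hu2 : u ^ 2 = φ + 2 * Real.pi * m := Real.sq_sqrt harg
  have huw : w < u := by
    rw [hu]; exact (Real.lt_sqrt hw0.le).2 hlow
  have hu0 : 0 < u := lt_trans hw0 huw
  have huw2 : u * w ≤ u * u := mul_le_mul_of_nonneg_left huw.le hu0.le
  have hgap : u - w ≤ 2 * Real.pi / w := by
    rw [le_div_iff₀ hw0]
    nlinarith [hhigh, hu2, huw2]
  have hsinw : Real.sin w = t := by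
    rw [hw, Real.sin_add_nat_mul_two_pi, hsv]
  have hle : |Real.sin u - t| ≤ |u - w| := by
    rw [← hsinw]; exact sin_lip u w
  have habs : |u - w| = u - w := abs_of_nonneg (by linarith)
  have hwε' : 2 * Real.pi / w < ε := by
    rw [div_lt_iff₀ hw0]
    have h4 : 4 * Real.pi < w * ε := (div_lt_iff₀ hε).1 hwε
    nlinarith
  exact ⟨m, u, hu2, lt_trans hwW huw, by rw [habs] at hle; linarith⟩

/-- Every point of the closed disk `{(1/(δπ), x, y) : x² + y² ≤ 1}` lies in the closure of the
graph of `h(s) = (sin θ(s)·cos(θ(s)²), sin θ(s)·sin(θ(s)²))`, where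
`θ(s) = 1/(δs − 1/π)`, over `s < 1/(δπ)`. -/
theorem disk_subset_closure_graph (δ : ℝ) (hδ : 0 < δ)
    (θ : ℝ → ℝ) (hθ : ∀ s : ℝ, θ s = 1 / (δ * s - 1 / Real.pi))
    (h : ℝ → ℝ × ℝ)
    (hh : ∀ s : ℝ, h s = (Real.sin (θ s) * Real.cos ((θ s) ^ 2),
      Real.sin (θ s) * Real.sin ((θ s) ^ 2))) :
    ∀ x y : ℝ, x ^ 2 + y ^ 2 ≤ 1 →
      ((1 / (δ * Real.pi), x, y) : ℝ × ℝ × ℝ) ∈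
        closure {q : ℝ × ℝ × ℝ |
          ∃ s : ℝ, s < 1 / (δ * Real.pi) ∧ q = (s, (h s).1, (h s).2)} := by
  intro x y hxy
  have hπ := Real.pi_pos
  rw [Metric.mem_closure_iff]
  intro ε hε
  obtain ⟨r, φ, hr0, hr2, hx, hy⟩ := polar x y
  have hr1 : r ≤ 1 := by nlinarith
  obtain ⟨m, u, hu2, huW, husin⟩ := key φ (-r) (1 / (δ * ε)) ε
    (by rw [abs_neg, abs_of_nonneg hr0]; exact hr1) hε
  have hu0 : 0 < u := lt_of_le_of_lt (by positivity) huW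
  set θ₀ : ℝ := -u with hθ₀
  have hθne : θ₀ ≠ 0 := by simp [hθ₀, hu0.ne']
  set s₀ : ℝ := (1 / θ₀ + 1 / Real.pi) / δ with hs₀
  have hδs : δ * s₀ - 1 / Real.pi = 1 / θ₀ := by
    rw [hs₀]; field_simp; ring
  have hθs : θ s₀ = θ₀ := by rw [hθ, hδs, one_div_one_div]
  have hslt : s₀ < 1 / (δ * Real.pi) := by
    rw [hs₀, div_lt_div_iff₀ hδ (by positivity), hθ₀]
    have : (1 : ℝ) / (-u) < 0 := by
      apply div_neg_of_pos_of_neg one_pos; linarith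
    have hmain : (1 / (-u) + 1 / Real.pi) * Real.pi < 1 := by
      have : (1 / (-u)) * Real.pi < 0 := mul_neg_of_neg_of_pos this hπ
      calc (1 / (-u) + 1 / Real.pi) * Real.pi
          = (1 / (-u)) * Real.pi + 1 := by field_simp
        _ < 1 := by linarith
    calc (1 / (-u) + 1 / Real.pi) * (δ * Real.pi)
        = ((1 / (-u) + 1 / Real.pi) * Real.pi) * δ := by ring
      _ < 1 * δ := by exact mul_lt_mul_of_pos_right hmain hδ
      _ = 1 * δ := rfl
  -- compute the curve point
  have hθsq : (θ₀ : ℝ) ^ 2 = φ + (m : ℝ) * (2 * Real.pi) := by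
    rw [hθ₀, neg_pow]; simp [hu2]; ring
  have hcos : Real.cos (θ₀ ^ 2) = Real.cos φ := by
    rw [hθsq, Real.cos_add_nat_mul_two_pi]
  have hsin2 : Real.sin (θ₀ ^ 2) = Real.sin φ := by
    rw [hθsq, Real.sin_add_nat_mul_two_pi]
  have hsinθ : Real.sin θ₀ = -Real.sin u := by rw [hθ₀, Real.sin_neg]
  have hc1 : (h s₀).1 = -Real.sin u * Real.cos φ := by
    rw [hh, hθs]; simp [hsinθ, hcos]
  have hc2 : (h s₀).2 = -Real.sin u * Real.sin φ := by
    rw [hh, hθs]; simp [hsinθ, hsin2]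
  refine ⟨(s₀, (h s₀).1, (h s₀).2), ⟨s₀, hslt, rfl⟩, ?_⟩
  have hsin_close : |Real.sin u + r| < ε := by
    have : |Real.sin u - -r| = |Real.sin u + r| := by ring_nf
    rw [← this]; exact husin
  -- distance bound
  rw [Prod.dist_eq, Prod.dist_eq]
  have d1 : dist (1 / (δ * Real.pi)) s₀ < ε := by
    rw [Real.dist_eq]
    have heq : 1 / (δ * Real.pi) - s₀ = 1 / (δ * u) := by
      rw [hs₀, hθ₀]; field_simp; ring
    rw [heq, abs_of_pos (by positivity)]
    rw [div_lt_iff₀ (by positivity)]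
    have h5 : 1 / (δ * ε) < u := huW
    calc (1 : ℝ) = (1 / (δ * ε)) * (δ * ε) := by field_simp
      _ < u * (δ * ε) := by
          apply mul_lt_mul_of_pos_right h5 (by positivity)
      _ = ε * (δ * u) := by ring
  have d2 : dist x (h s₀).1 < ε := by
    rw [Real.dist_eq, hc1, hx]
    have : r * Real.cos φ - -Real.sin u * Real.cos φ = (Real.sin u + r) * Real.cos φ := by ring
    rw [this, abs_mul]
    calc |Real.sin u + r| * |Real.cos φ| ≤ |Real.sin u + r| * 1 :=
          mul_le_mul_of_nonneg_left (Real.abs_cos_le_one φ) (abs_nonneg _)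
      _ < ε := by rw [mul_one]; exact hsin_close
  have d3 : dist y (h s₀).2 < ε := by
    rw [Real.dist_eq, hc2, hy]
    have : r * Real.sin φ - -Real.sin u * Real.sin φ = (Real.sin u + r) * Real.sin φ := by ring
    rw [this, abs_mul]
    calc |Real.sin u + r| * |Real.sin φ| ≤ |Real.sin u + r| * 1 :=
          mul_le_mul_of_nonneg_left (Real.abs_sin_le_one φ) (abs_nonneg _)
      _ < ε := by rw [mul_one]; exact hsin_close
  exact max_lt d1 (max_lt d2 d3)
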